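/- If the rooted graph (H,K_H) is a rooted minor of (G,K_G), then the K-free treewidth satisfies tw_K(H,K_H) ≤ tw_K(G,K_G). -/

import Mathlib

namespace TDMPaper

/-- A finite multigraph without loops: edges carry their unordered pair of endpoints. -/
structure MGraph where
  V : Type
  E : Type
  finV : Finite V
  finE : Finite E
  ends : E → Sym2 V
  loopless : ∀ e, ¬ (ends e).IsDiag

attribute [instance] MGraph.finV MGraph.finE

namespace MGraph

/-- A cycle in a multigraph, given by cyclically ordered distinct vertices and
distinct edges. -/
structure Cycle (G : MGraph) where
  n : ℕ
  npos : 0 < n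
  vtx : Fin n → G.V
  edge : Fin n → G.E
  vtx_inj : Function.Injective vtx
  edge_inj : Function.Injective edge
  ends_eq : ∀ i : Fin n,
    G.ends (edge i) = s(vtx i, vtx ⟨(i.1 + 1) % n, Nat.mod_lt _ npos⟩)

/-- The parity of a cycle with respect to a signing `γ`. -/
def Cycle.parity {G : MGraph} (C : G.Cycle) (γ : G.E → ZMod 2) : ZMod 2 :=
  ∑ i, γ (C.edge i)

/-- The vertex set of a cycle. -/
def Cycle.support {G : MGraph} (C : G.Cycle) : Set G.V := Set.range C.vtx

/-- The odd cycle packing number of a signed graph: the maximum number of pairwise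
vertex-disjoint odd cycles. -/
noncomputable def OCP (G : MGraph) (γ : G.E → ZMod 2) : ℕ :=
  sSup {k : ℕ | ∃ C : Fin k → G.Cycle,
    (∀ i, (C i).parity γ = 1) ∧
    ∀ i j, i ≠ j → Disjoint ((C i).support) ((C j).support)}

/-- The subgraph induced by a vertex set `S` (kept on the same vertex type; only
edges with both endpoints in `S` survive). -/
def induce (G : MGraph) (S : Set G.V) : MGraph where
  V := G.V
  E := {e : G.E // ∀ v ∈ G.ends e, v ∈ S}
  finV := G.finV
  finE := inferInstance
  ends := fun e => G.ends e.1
  loopless := fun e => G.loopless e.1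

/-- The odd cycle packing number of the subgraph induced on `S`, signs inherited. -/
noncomputable def OCPOn (G : MGraph) (γ : G.E → ZMod 2) (S : Set G.V) : ℕ :=
  (G.induce S).OCP (fun e => γ e.1)

/-- A path in a multigraph. -/
structure Path (G : MGraph) where
  n : ℕ
  vtx : Fin (n + 1) → G.V
  edge : Fin n → G.E
  vtx_inj : Function.Injective vtx
  ends_eq : ∀ i : Fin n, G.ends (edge i) = s(vtx i.castSucc, vtx i.succ)

def Path.first {G : MGraph} (P : G.Path) : G.V := P.vtx 0
def Path.last {G : MGraph} (P : G.Path) : G.V := P.vtx (Fin.last P.n)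
def Path.support {G : MGraph} (P : G.Path) : Set G.V := Set.range P.vtx
def Path.internals {G : MGraph} (P : G.Path) : Set G.V :=
  P.support \ {P.first, P.last}
def Path.parity {G : MGraph} (P : G.Path) (γ : G.E → ZMod 2) : ZMod 2 :=
  ∑ i, γ (P.edge i)

end MGraph

open MGraph

/-- `γ'` is obtained from `γ` by a sequence of shiftings at vertices. -/
def IsShift (G : MGraph) (γ γ' : G.E → ZMod 2) : Prop :=
  ∃ σ : G.V → ZMod 2, ∀ e u v, G.ends e = s(u, v) → γ' e = γ e + σ u + σ v

/-- A minor model of `H` in `G`: disjoint nonempty connected branch sets and an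
injective assignment of edges. -/
structure MinorModel (H G : MGraph) where
  bs : H.V → Set G.V
  em : H.E → G.E
  bs_nonempty : ∀ v, (bs v).Nonempty
  bs_disjoint : ∀ u v, u ≠ v → Disjoint (bs u) (bs v)
  bs_connected : ∀ v, ∀ a ∈ bs v, ∀ b ∈ bs v,
    Relation.ReflTransGen
      (fun x y => x ∈ bs v ∧ y ∈ bs v ∧ ∃ e, G.ends e = s(x, y)) a b
  em_inj : Function.Injective em
  em_ends : ∀ eH u v, H.ends eH = s(u, v) →
    ∃ a ∈ bs u, ∃ b ∈ bs v, G.ends (em eH) = s(a, b)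

/-- `H` is a minor of `G`. -/
def IsMinor (H G : MGraph) : Prop := Nonempty (MinorModel H G)

/-- `(H,KH)` is a rooted minor of `(G,KG)`: there is a minor model in which the
branch set of every root of `H` contains a root of `G`. -/
def IsRootedMinor (H : MGraph) (KH : Set H.V) (G : MGraph) (KG : Set G.V) : Prop :=
  ∃ M : MinorModel H G, ∀ v ∈ KH, (M.bs v ∩ KG).Nonempty

/-- A signed minor model of `(H,γH)` in `(G,γG)`: after shifting, branch sets are
connected through even edges and edges of `H` get edges of `G` of the correct sign. -/
structure SignedMinorModel (H G : MGraph) (γH : H.E → ZMod 2) (γG : G.E → ZMod 2) where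
  γ' : G.E → ZMod 2
  shift : IsShift G γG γ'
  bs : H.V → Set G.V
  em : H.E → G.E
  bs_nonempty : ∀ v, (bs v).Nonempty
  bs_disjoint : ∀ u v, u ≠ v → Disjoint (bs u) (bs v)
  bs_connected : ∀ v, ∀ a ∈ bs v, ∀ b ∈ bs v,
    Relation.ReflTransGen
      (fun x y => x ∈ bs v ∧ y ∈ bs v ∧ ∃ e, γ' e = 0 ∧ G.ends e = s(x, y)) a b
  em_inj : Function.Injective em
  em_ends : ∀ eH u v, H.ends eH = s(u, v) →
    ∃ a ∈ bs u, ∃ b ∈ bs v, G.ends (em eH) = s(a, b)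
  em_parity : ∀ eH, γ' (em eH) = γH eH

/-- `(H,γH)` is a signed graph minor of `(G,γG)`. -/
def IsSignedMinor (H : MGraph) (γH : H.E → ZMod 2) (G : MGraph)
    (γG : G.E → ZMod 2) : Prop :=
  Nonempty (SignedMinorModel H G γH γG)

/-- `(H,γH,KH)` is a rooted signed graph minor of `(G,γG,KG)`. -/
def IsRootedSignedMinor (H : MGraph) (γH : H.E → ZMod 2) (KH : Set H.V)
    (G : MGraph) (γG : G.E → ZMod 2) (KG : Set G.V) : Prop :=
  ∃ M : SignedMinorModel H G γH γG, ∀ v ∈ KH, (M.bs v ∩ KG).Nonempty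

/-- An odd minor model of `H` in `G`: a minor model together with a 2-colouring of
`G` which is proper on each branch set (branch sets are connected through
bichromatic edges) and for which every model edge is monochromatic. -/
structure OddMinorModel (H G : MGraph) where
  bs : H.V → Set G.V
  em : H.E → G.E
  col : G.V → ZMod 2
  bs_nonempty : ∀ v, (bs v).Nonempty
  bs_disjoint : ∀ u v, u ≠ v → Disjoint (bs u) (bs v)
  bs_connected : ∀ v, ∀ a ∈ bs v, ∀ b ∈ bs v,
    Relation.ReflTransGen
      (fun x y => x ∈ bs v ∧ y ∈ bs v ∧ col x ≠ col y ∧ ∃ e, G.ends e = s(x, y)) a b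
  em_inj : Function.Injective em
  em_ends : ∀ eH u v, H.ends eH = s(u, v) →
    ∃ a ∈ bs u, ∃ b ∈ bs v, G.ends (em eH) = s(a, b)
  em_mono : ∀ eH u v, G.ends (em eH) = s(u, v) → col u = col v

/-- `G` contains `H` as an odd-minor. -/
def IsOddMinor (H G : MGraph) : Prop := Nonempty (OddMinorModel H G)

/-- `(G,γG)` contains `(H,γH)` as a subdivision. -/
def IsSignedSubdivision (H : MGraph) (γH : H.E → ZMod 2) (G : MGraph)
    (γG : G.E → ZMod 2) : Prop :=
  ∃ (γH' : H.E → ZMod 2) (_ : IsShift H γH γH')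
    (φV : H.V → G.V) (φE : H.E → G.Path),
    Function.Injective φV ∧
    (∀ eH u v, H.ends eH = s(u, v) →
      s((φE eH).first, (φE eH).last) = s(φV u, φV v)) ∧
    (∀ eH, (φE eH).parity γG = γH' eH) ∧
    (∀ e e', e ≠ e' → Disjoint ((φE e).internals) ((φE e').support)) ∧
    (∀ e, Disjoint ((φE e).internals) (Set.range φV))

/-! ## Tree decompositions and width parameters -/

/-- A tree decomposition of a multigraph. -/
structure TreeDecomp (G : MGraph) where
  ι : Type
  tree : SimpleGraph ι
  isTree : tree.IsTree
  bag : ι → Set G.V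
  covers_vertex : ∀ v, ∃ t, v ∈ bag t
  covers_edge : ∀ e, ∃ t, ∀ v ∈ G.ends e, v ∈ bag t
  bag_connected : ∀ v, (tree.induce {t | v ∈ bag t}).Connected

/-- A node of a tree is a leaf if it has at most one neighbour. -/
def IsLeaf {ι : Type} (T : SimpleGraph ι) (t : ι) : Prop :=
  (T.neighborSet t).Subsingleton

/-- A tree `K`-free-decomposition. -/
structure KFreeDecomp (G : MGraph) (K : Set G.V) extends TreeDecomp G where
  L : Set G.V
  L_disj : Disjoint L K
  unique_bag : ∀ v ∈ L, ∃! t, v ∈ bag t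
  leaf_bag : ∀ v ∈ L, ∀ t, v ∈ bag t → IsLeaf tree t

/-- The width of a tree `K`-free-decomposition: `max {0, max_t |β(t)\L| - 1}`. -/
noncomputable def KFreeDecomp.width {G : MGraph} {K : Set G.V}
    (D : KFreeDecomp G K) : ℕ :=
  ⨆ t : D.ι, ((D.bag t \ D.L).ncard - 1)

/-- The `K`-free treewidth of `(G,K)`. -/
noncomputable def twK (G : MGraph) (K : Set G.V) : ℕ :=
  sInf {w | ∃ D : KFreeDecomp G K, D.width = w}

/-- A tame OCP-tree-decomposition of a signed graph. -/
structure TameOCPDecomp (G : MGraph) (γ : G.E → ZMod 2) extends TreeDecomp G where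
  prot : ι → Set G.V
  prot_sub : ∀ t, prot t ⊆ bag t
  prot_adh : ∀ t t', tree.Adj t t' → ((bag t ∩ bag t') \ prot t).ncard ≤ 1

/-- The tame width (t-width) of a tame OCP-tree-decomposition. -/
noncomputable def TameOCPDecomp.twidth {G : MGraph} {γ : G.E → ZMod 2}
    (D : TameOCPDecomp G γ) : ℕ :=
  ⨆ t : D.ι, ((D.prot t).ncard + G.OCPOn γ (D.bag t \ D.prot t))

/-- The tame OCP-treewidth of a signed graph. -/
noncomputable def tOCPtw (G : MGraph) (γ : G.E → ZMod 2) : ℕ :=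
  sInf {w | ∃ D : TameOCPDecomp G γ, D.twidth = w}

/-- A TDM-tree-decomposition of a rooted signed graph. -/
structure TDMDecomp (G : MGraph) (γ : G.E → ZMod 2) (K : Set G.V)
    extends TreeDecomp G where
  prot : ι → Set G.V
  J : Set ι
  J_subtree : J.Nonempty → (tree.induce J).Connected
  prot_sub : ∀ t, prot t ⊆ bag t
  prot_roots : ∀ t, K ∩ bag t ⊆ prot t
  prot_adh : ∀ t t', tree.Adj t t' → ((bag t ∩ bag t') \ prot t).ncard ≤ 1
  strong : ∀ t ∈ J, ∀ t', tree.Adj t t' → bag t ∩ bag t' ⊆ prot t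
  roots_in_J : K ⊆ ⋃ j ∈ J, bag j

/-- The width of a TDM-tree-decomposition. -/
noncomputable def TDMDecomp.width {G : MGraph} {γ : G.E → ZMod 2} {K : Set G.V}
    (D : TDMDecomp G γ K) : ℕ :=
  ⨆ t : D.ι, ((D.prot t).ncard + G.OCPOn γ (D.bag t \ D.prot t))

/-- The TDM-treewidth of a rooted signed graph. -/
noncomputable def TDMtw (G : MGraph) (γ : G.E → ZMod 2) (K : Set G.V) : ℕ :=
  sInf {w | ∃ D : TDMDecomp G γ K, D.width = w}

/-! ## Grids, parity handles, parity vortices -/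

/-- Adjacency of the grid, on `ℕ × ℕ` coordinates. -/
def gridAdj (a b : ℕ × ℕ) : Prop :=
  (a.1 = b.1 ∧ (a.2 + 1 = b.2 ∨ b.2 + 1 = a.2)) ∨
  (a.2 = b.2 ∧ (a.1 + 1 = b.1 ∨ b.1 + 1 = a.1))

/-- The `k × k` grid. -/
def gridGraph (k : ℕ) : MGraph where
  V := Fin k × Fin k
  E := {e : Sym2 (Fin k × Fin k) //
    ∃ a b : Fin k × Fin k, gridAdj (a.1.1, a.2.1) (b.1.1, b.2.1) ∧ e = s(a, b)}
  finV := inferInstance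
  finE := inferInstance
  ends := Subtype.val
  loopless := fun e he => by
    obtain ⟨a, b, hab, h⟩ := e.2
    rw [h, Sym2.mk_isDiag_iff] at he
    subst he
    rcases hab with ⟨_, h' | h'⟩ | ⟨_, h' | h'⟩ <;> omega

/-- The first row of the `k × k` grid. -/
def firstRow (k : ℕ) : Set (gridGraph k).V := {p : Fin k × Fin k | p.1.1 = 0}

/-- The `i`-th designated vertex `x_i` on the outer face of the cylindrical
`(k × 4k)`-grid (every other vertex, `0`-indexed). -/
def xvtx (k : ℕ) (i : Fin (2 * k)) : Fin k × Fin (4 * k) :=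
  (⟨0, by have := i.2; omega⟩, ⟨2 * i.1, by have := i.2; omega⟩)

/-- Adjacency of the cylindrical `(k × 4k)`-grid `P_k □ C_{4k}`. -/
def cylAdj (k : ℕ) (a b : Fin k × Fin (4 * k)) : Prop :=
  (a.1 = b.1 ∧ (a.2.1 + 1 = b.2.1 ∨ b.2.1 + 1 = a.2.1 ∨
    (a.2.1 = 0 ∧ b.2.1 + 1 = 4 * k) ∨ (b.2.1 = 0 ∧ a.2.1 + 1 = 4 * k))) ∨
  (a.2 = b.2 ∧ (a.1.1 + 1 = b.1.1 ∨ b.1.1 + 1 = a.1.1))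

/-- The chords `x_i x_{2k-i+1}` of the parity handle. -/
def handleChord (k : ℕ) (e : Sym2 (Fin k × Fin (4 * k))) : Prop :=
  ∃ i : Fin k, e = s(xvtx k ⟨i.1, by have := i.2; omega⟩,
    xvtx k ⟨2 * k - 1 - i.1, by have := i.2; omega⟩)

/-- The chords `x_{2i-1} x_{2i}` of the parity vortex. -/
def vortexChord (k : ℕ) (e : Sym2 (Fin k × Fin (4 * k))) : Prop :=
  ∃ i : Fin k, e = s(xvtx k ⟨2 * i.1, by have := i.2; omega⟩,
    xvtx k ⟨2 * i.1 + 1, by have := i.2; omega⟩)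

lemma xvtx_ne (k : ℕ) (i j : Fin (2 * k)) (h : i.1 ≠ j.1) : xvtx k i ≠ xvtx k j := by
  intro hc
  have := congrArg (fun p => p.2.1) hc
  simp only [xvtx] at this
  omega

/-- The unsigned, unrooted parity handle `H_k`. -/
def handleGraph (k : ℕ) : MGraph where
  V := Fin k × Fin (4 * k)
  E := {e : Sym2 (Fin k × Fin (4 * k)) //
    (∃ a b, cylAdj k a b ∧ e = s(a, b)) ∨ handleChord k e}
  finV := inferInstance
  finE := inferInstance
  ends := Subtype.val
  loopless := fun e he => by
    rcases e.2 with ⟨a, b, hab, h⟩ | ⟨i, h⟩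
    · rw [h, Sym2.mk_isDiag_iff] at he
      subst he
      have h1 := a.1.2
      have h2 := a.2.2
      rcases hab with ⟨_, h' | h' | ⟨h', h''⟩ | ⟨h', h''⟩⟩ | ⟨_, h' | h'⟩ <;> omega
    · rw [h, Sym2.mk_isDiag_iff] at he
      have := i.2
      exact xvtx_ne k _ _ (show (i.1 : ℕ) ≠ 2 * k - 1 - i.1 by omega) he

/-- The unsigned, unrooted parity vortex `V_k`. -/
def vortexGraph (k : ℕ) : MGraph where
  V := Fin k × Fin (4 * k)
  E := {e : Sym2 (Fin k × Fin (4 * k)) //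
    (∃ a b, cylAdj k a b ∧ e = s(a, b)) ∨ vortexChord k e}
  finV := inferInstance
  finE := inferInstance
  ends := Subtype.val
  loopless := fun e he => by
    rcases e.2 with ⟨a, b, hab, h⟩ | ⟨i, h⟩
    · rw [h, Sym2.mk_isDiag_iff] at he
      subst he
      have h1 := a.1.2
      have h2 := a.2.2
      rcases hab with ⟨_, h' | h' | ⟨h', h''⟩ | ⟨h', h''⟩⟩ | ⟨_, h' | h'⟩ <;> omega
    · rw [h, Sym2.mk_isDiag_iff] at he
      have := i.2
      exact xvtx_ne k _ _ (show (2 * i.1 : ℕ) ≠ 2 * i.1 + 1 by omega) he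

/-- The all-zero signing. -/
def γ₀ (G : MGraph) : G.E → ZMod 2 := fun _ => 0

/-- The all-one signing. -/
def γ₁ (G : MGraph) : G.E → ZMod 2 := fun _ => 1

/-! ## Matrices with two nonzero entries per row -/

/-- `A` has exactly two nonzero entries in every row. -/
def TwoNonzeroPerRow {m n : ℕ} (A : Matrix (Fin m) (Fin n) ℤ) : Prop :=
  ∀ i, {j | A i j ≠ 0}.ncard = 2

/-- The graph `G(A)` of a matrix with exactly two nonzero entries per row:
vertices are columns, edges are rows, each row joining its two nonzero columns. -/
noncomputable def matrixGraph {m n : ℕ} (A : Matrix (Fin m) (Fin n) ℤ)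
    (h : TwoNonzeroPerRow A) : MGraph where
  V := Fin n
  E := Fin m
  finV := inferInstance
  finE := inferInstance
  ends := fun i => s((Set.ncard_eq_two.mp (h i)).choose,
    (Set.ncard_eq_two.mp (h i)).choose_spec.choose)
  loopless := fun i hi => by
    rw [Sym2.mk_isDiag_iff] at hi
    exact (Set.ncard_eq_two.mp (h i)).choose_spec.choose_spec.1 hi

/-- The signing of `G(A)`: a row is even iff its two nonzero entries have
different signs (i.e. the product of its nonzero entries is negative). -/
def matrixSign {m n : ℕ} (A : Matrix (Fin m) (Fin n) ℤ) : Fin m → ZMod 2 :=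
  fun i => if (∏ j ∈ Finset.univ.filter (fun j => A i j ≠ 0), A i j) < 0 then 0 else 1

/-- The roots of `G⁺_•(A)`: columns containing an entry outside `{-1,0,1}`. -/
def matrixRoots {m n : ℕ} (A : Matrix (Fin m) (Fin n) ℤ) : Set (Fin n) :=
  {j | ∃ i, 1 < (A i j).natAbs}

/-- The TDM-treewidth of the rooted signed graph `G⁺_•(A)` associated to `A`. -/
noncomputable def matrixTDMtw {m n : ℕ} (A : Matrix (Fin m) (Fin n) ℤ)
    (h : TwoNonzeroPerRow A) : ℕ :=
  TDMtw (matrixGraph A h) (fun e => matrixSign A e) (fun j => matrixRoots A j)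

/-- The largest absolute value of an entry of `A`. -/
def maxAbsEntry {m n : ℕ} (A : Matrix (Fin m) (Fin n) ℤ) : ℕ :=
  Finset.sup Finset.univ fun i => Finset.sup Finset.univ fun j => (A i j).natAbs

/-- `A` is totally `Δ`-modular: every square subdeterminant has absolute value at
most `Δ`. -/
def TotallyDeltaModular {m n : ℕ} (A : Matrix (Fin m) (Fin n) ℤ) (Δ : ℕ) : Prop :=
  ∀ (s : ℕ) (r : Fin s → Fin m) (c : Fin s → Fin n),
    Function.Injective r → Function.Injective c →
    ((A.submatrix r c).det).natAbs ≤ Δ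

/-- The set of objective values of feasible points of the integer program
`max { wᵀx : Ax ≤ b, ℓ ≤ x ≤ u, x integral }`. -/
def IPvalues {m n : ℕ} (A : Matrix (Fin m) (Fin n) ℤ) (b : Fin m → ℤ)
    (w ℓ u : Fin n → ℤ) : Set ℤ :=
  {y | ∃ x : Fin n → ℤ, (∀ i, ∑ j, A i j * x j ≤ b i) ∧
    (∀ j, ℓ j ≤ x j ∧ x j ≤ u j) ∧ y = ∑ j, w j * x j}

/-- `o` solves the maximization problem over `S`: it is `none` iff `S` is
infeasible, and otherwise it is the maximum value. -/
def SolvesIP (o : Option ℤ) (S : Set ℤ) : Prop :=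
  (o = none ∧ S = ∅) ∨ ∃ y, o = some y ∧ IsGreatest S y


lemma exists_pair {α : Type} (z : Sym2 α) : ∃ p : α × α, z = s(p.1, p.2) :=
  Sym2.ind (fun a b => ⟨(a, b), rfl⟩) z

/-- A chosen first endpoint of an edge. -/
noncomputable def MGraph.ep1 (G : MGraph) (e : G.E) : G.V :=
  (exists_pair (G.ends e)).choose.1

/-- A chosen second endpoint of an edge. -/
noncomputable def MGraph.ep2 (G : MGraph) (e : G.E) : G.V :=
  (exists_pair (G.ends e)).choose.2

lemma MGraph.ends_ep (G : MGraph) (e : G.E) : G.ends e = s(G.ep1 e, G.ep2 e) :=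
  (exists_pair (G.ends e)).choose_spec

lemma map_inl_not_isDiag {α β : Type} (z : Sym2 α) (hz : ¬ z.IsDiag) :
    ¬ (z.map (Sum.inl : α → α ⊕ β)).IsDiag := by
  induction z using Sym2.ind with
  | _ a b =>
    simp only [Sym2.map_pair_eq, Sym2.mk_isDiag_iff] at *
    exact fun h => hz (by injection h)

/-- The graph obtained from `(G,γ)` by subdividing every even edge exactly once. -/
noncomputable def subdivideEven (G : MGraph) (γ : G.E → ZMod 2) : MGraph where
  V := G.V ⊕ {e : G.E // γ e = 0}
  E := {e : G.E // γ e ≠ 0} ⊕ ({e : G.E // γ e = 0} × Bool)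
  finV := inferInstance
  finE := inferInstance
  ends := fun x =>
    match x with
    | .inl e => (G.ends e.1).map .inl
    | .inr (e, b) => s(.inr e, .inl (if b then G.ep1 e.1 else G.ep2 e.1))
  loopless := fun x => by
    match x with
    | .inl e => exact map_inl_not_isDiag _ (G.loopless e.1)
    | .inr (e, b) =>
      rw [Sym2.mk_isDiag_iff]
      simp

/-- Minimum degree at least `d` (each vertex is incident to at least `d` edges). -/
def minDegreeGE (G : MGraph) (d : ℕ) : Prop :=
  ∀ v : G.V, d ≤ {e : G.E | v ∈ G.ends e}.ncard

/-- The `j`-th vertex of the subdividing path: `u`, then `ℓ` new internal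
vertices, then `v`. -/
def pathVert {α : Type} (u v : α) (ℓ : ℕ) (j : Fin (ℓ + 2)) : α ⊕ Fin ℓ :=
  if h0 : j.1 = 0 then .inl u
  else if h1 : j.1 = ℓ + 1 then .inl v
  else .inr ⟨j.1 - 1, by have := j.2; omega⟩

/-- The graph obtained from `G` by replacing the edge `e₀` (with ends `u,v`) by a
path with `ℓ` internal vertices (hence `ℓ + 1` edges). -/
def replaceEdge (G : MGraph) (e₀ : G.E) (u v : G.V) (h : G.ends e₀ = s(u, v))
    (ℓ : ℕ) : MGraph where
  V := G.V ⊕ Fin ℓ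
  E := {e : G.E // e ≠ e₀} ⊕ Fin (ℓ + 1)
  finV := inferInstance
  finE := inferInstance
  ends := fun x =>
    match x with
    | .inl e => (G.ends e.1).map .inl
    | .inr i => s(pathVert u v ℓ ⟨i.1, by have := i.2; omega⟩,
        pathVert u v ℓ ⟨i.1 + 1, by have := i.2; omega⟩)
  loopless := fun x => by
    match x with
    | .inl e => exact map_inl_not_isDiag _ (G.loopless e.1)
    | .inr i =>
      rw [Sym2.mk_isDiag_iff]
      have huv : u ≠ v := by
        intro hc
        exact G.loopless e₀ (by rw [h, hc]; simp)
      have hi := i.2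
      simp only [pathVert]
      split_ifs <;> (simp_all; try omega)

/-- The signing of `replaceEdge`: old edges keep their sign, the `i`-th path edge
gets sign `δ i`. -/
def replaceGamma {G : MGraph} {e₀ : G.E} {u v : G.V} {h : G.ends e₀ = s(u, v)}
    {ℓ : ℕ} (γ : G.E → ZMod 2) (δ : Fin (ℓ + 1) → ZMod 2) :
    (replaceEdge G e₀ u v h ℓ).E → ZMod 2 :=
  fun x => match x with
  | .inl e => γ e.1
  | .inr i => δ i



/-! ### Auxiliary machinery for Statement 9 -/

open Relation in
/-- Reachability within a vertex set, as a relation on the ambient type. -/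
def relOn {ι : Type} (T : SimpleGraph ι) (s : Set ι) (x y : ι) : Prop :=
  x ∈ s ∧ y ∈ s ∧ T.Adj x y

lemma rtg_of_walk {ι : Type} (T : SimpleGraph ι) (s : Set ι) {a b : s}
    (w : (T.induce s).Walk a b) : Relation.ReflTransGen (relOn T s) a.1 b.1 := by
  induction w with
  | nil => exact .refl
  | cons h _ ih =>
    exact .head ⟨(by exact Subtype.coe_prop _), (by exact Subtype.coe_prop _), h⟩ ih

lemma rtg_reachable {ι : Type} (T : SimpleGraph ι) (s : Set ι) {x y : ι}
    (hr : Relation.ReflTransGen (relOn T s) x y) (hx : x ∈ s) :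
    ∀ hy : y ∈ s, (T.induce s).Reachable ⟨x, hx⟩ ⟨y, hy⟩ := by
  induction hr with
  | refl => exact fun hy => .refl _
  | tail _ step ih =>
    intro hy
    exact (ih step.1).trans (SimpleGraph.Adj.reachable (by exact step.2.2))

lemma induce_connected_iff {ι : Type} (T : SimpleGraph ι) (s : Set ι) :
    (T.induce s).Connected ↔
      s.Nonempty ∧ ∀ x ∈ s, ∀ y ∈ s, Relation.ReflTransGen (relOn T s) x y := by
  constructor
  · intro hc
    obtain ⟨⟨x, hx⟩⟩ := hc.nonempty
    refine ⟨⟨x, hx⟩, fun a ha b hb => ?_⟩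
    obtain ⟨w⟩ := hc.preconnected ⟨a, ha⟩ ⟨b, hb⟩
    exact rtg_of_walk T s w
  · rintro ⟨⟨x, hx⟩, hr⟩
    rw [SimpleGraph.connected_iff]
    refine ⟨fun a b => ?_, ⟨⟨x, hx⟩⟩⟩
    have := rtg_reachable T s (hr a.1 a.2 b.1 b.2) a.2 b.2
    simpa using this

lemma subsingleton_connected {α : Type} [Subsingleton α] [Nonempty α]
    (T : SimpleGraph α) : T.Connected := by
  rw [SimpleGraph.connected_iff]
  exact ⟨fun a b => by rw [Subsingleton.elim a b], ‹_›⟩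

/-- Every graph has a (trivial, one-bag) tree `K`-free-decomposition. -/
noncomputable def trivialDecomp (G : MGraph) (K : Set G.V) : KFreeDecomp G K where
  ι := PUnit
  tree := ⊥
  isTree := ⟨subsingleton_connected _, SimpleGraph.isAcyclic_bot⟩
  bag := fun _ => Set.univ
  covers_vertex := fun _ => ⟨PUnit.unit, trivial⟩
  covers_edge := fun _ => ⟨PUnit.unit, fun _ _ => trivial⟩
  bag_connected := fun v => by
    haveI : Nonempty ({t : PUnit | v ∈ (Set.univ : Set G.V)} : Set PUnit) :=
      ⟨⟨PUnit.unit, trivial⟩⟩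
    exact subsingleton_connected _
  L := ∅
  L_disj := Set.disjoint_left.mpr fun _ h => h.elim
  unique_bag := fun _ hv => hv.elim
  leaf_bag := fun _ hv => hv.elim

lemma key_step {H : MGraph} {KH : Set H.V} {G : MGraph} {KG : Set G.V}
    (M : MinorModel H G) (hM : ∀ v ∈ KH, (M.bs v ∩ KG).Nonempty)
    (D : KFreeDecomp G KG) : ∃ D' : KFreeDecomp H KH, D'.width ≤ D.width := by
  classical
  set bag' : D.ι → Set H.V := fun t => {v | ∃ x ∈ M.bs v, x ∈ D.bag t} with hbag'
  set L' : Set H.V :=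
    {v | v ∉ KH ∧ (∃! t, v ∈ bag' t) ∧ ∀ t, v ∈ bag' t → IsLeaf D.tree t} with hL'
  have huniq : ∀ x ∈ D.L, ∀ t t', x ∈ D.bag t → x ∈ D.bag t' → t = t' := by
    intro x hx t t' ht ht'
    obtain ⟨t₀, _, hu⟩ := D.unique_bag x hx
    rw [hu t ht, hu t' ht']
  have hedge : ∀ x y : G.V, (∃ e, G.ends e = s(x, y)) →
      ∃ t, x ∈ D.bag t ∧ y ∈ D.bag t := by
    rintro x y ⟨e, he⟩
    obtain ⟨t, ht⟩ := D.covers_edge e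
    exact ⟨t, ht x (by rw [he]; exact Sym2.mem_mk_left x y),
      ht y (by rw [he]; exact Sym2.mem_mk_right x y)⟩
  have hbagrtg : ∀ x : G.V, ∀ t t', x ∈ D.bag t → x ∈ D.bag t' →
      Relation.ReflTransGen (relOn D.tree {s | x ∈ D.bag s}) t t' := by
    intro x t t' ht ht'
    exact ((induce_connected_iff _ _).mp (D.bag_connected x)).2 t ht t' ht'
  have hchain : ∀ v : H.V, ∀ x ∈ M.bs v, ∀ b,
      Relation.ReflTransGen
        (fun p q => p ∈ M.bs v ∧ q ∈ M.bs v ∧ ∃ e, G.ends e = s(p, q)) x b →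
      ∀ t t', x ∈ D.bag t → b ∈ D.bag t' →
      Relation.ReflTransGen (relOn D.tree {s | v ∈ bag' s}) t t' := by
    intro v x hx b hrtg
    induction hrtg with
    | refl =>
      intro t t' ht ht'
      exact Relation.ReflTransGen.mono
        (fun a b hab => ⟨⟨x, hx, hab.1⟩, ⟨x, hx, hab.2.1⟩, hab.2.2⟩) _ _ (hbagrtg x t t' ht ht')
    | @tail b c hr step ih =>
      intro t t' ht ht'
      obtain ⟨hb, hc, e, he⟩ := step
      obtain ⟨t₀, hbt₀, hct₀⟩ := hedge _ _ ⟨e, he⟩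
      exact (ih t t₀ ht hbt₀).trans (Relation.ReflTransGen.mono
        (fun a b hab => ⟨⟨_, hc, hab.1⟩, ⟨_, hc, hab.2.1⟩, hab.2.2⟩) _ _ (hbagrtg _ t₀ t' hct₀ ht'))
  have hA : ∀ v : H.V, ∀ x ∈ M.bs v, ∀ t, x ∈ D.bag t → x ∈ D.L → ∀ z,
      Relation.ReflTransGen
        (fun p q => p ∈ M.bs v ∧ q ∈ M.bs v ∧ ∃ e, G.ends e = s(p, q)) x z →
      (∃ y, y ∈ M.bs v ∧ y ∈ D.bag t ∧ y ∉ D.L) ∨ (z ∈ D.L ∧ z ∈ D.bag t) := by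
    intro v x hx t hxt hxL z hrtg
    induction hrtg with
    | refl => exact Or.inr ⟨hxL, hxt⟩
    | @tail b c hr step ih =>
      rcases ih with h | ⟨hbL, hbt⟩
      · exact Or.inl h
      · obtain ⟨hb, hc, e, he⟩ := step
        obtain ⟨t₀, hbt₀, hct₀⟩ := hedge _ _ ⟨e, he⟩
        have ht₀ : t₀ = t := huniq _ hbL t₀ t hbt₀ hbt
        subst ht₀
        by_cases hcL : c ∈ D.L
        · exact Or.inr ⟨hcL, hct₀⟩
        · exact Or.inl ⟨c, hc, hct₀, hcL⟩
  have hsel : ∀ t, ∀ v ∈ bag' t, v ∉ L' →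
      ∃ y, y ∈ M.bs v ∧ y ∈ D.bag t ∧ y ∉ D.L := by
    intro t v hv hvL'
    obtain ⟨x, hxv, hxt⟩ := hv
    by_cases hxL : x ∈ D.L
    · by_cases hz : ∃ z ∈ M.bs v, z ∉ D.L
      · obtain ⟨z, hzv, hzL⟩ := hz
        rcases hA v x hxv t hxt hxL z (M.bs_connected v x hxv z hzv) with h | ⟨h, _⟩
        · exact h
        · exact absurd h hzL
      · push_neg at hz
        exfalso; apply hvL'
        have huniq' : ∀ t', v ∈ bag' t' → t' = t := by
          rintro t' ⟨x', hx'v, hx't'⟩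
          rcases hA v x hxv t hxt hxL x' (M.bs_connected v x hxv x' hx'v) with
            h | ⟨h1, h2⟩
          · obtain ⟨y, hy, _, hyL⟩ := h; exact absurd (hz y hy) hyL
          · exact huniq x' h1 t' t hx't' h2
        refine ⟨?_, ⟨t, ⟨x, hxv, hxt⟩, huniq'⟩, ?_⟩
        · intro hvK
          obtain ⟨r, hrv, hrK⟩ := hM v hvK
          exact absurd hrK (Set.disjoint_left.mp D.L_disj (hz r hrv))
        · intro t' ht'
          rw [huniq' t' ht']
          exact D.leaf_bag x hxL t hxt
    · exact ⟨x, hxv, hxt, hxL⟩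
  haveI : Nonempty D.ι := D.isTree.1.nonempty
  refine ⟨⟨⟨D.ι, D.tree, D.isTree, bag', ?_, ?_, ?_⟩, L', ?_, ?_, ?_⟩, ?_⟩
  · intro v
    obtain ⟨x, hx⟩ := M.bs_nonempty v
    obtain ⟨t, ht⟩ := D.covers_vertex x
    exact ⟨t, x, hx, ht⟩
  · intro e
    obtain ⟨a, ha, b, hb, hab⟩ := M.em_ends e (H.ep1 e) (H.ep2 e) (H.ends_ep e)
    obtain ⟨t₀, ht₀⟩ := hedge a b ⟨M.em e, hab⟩
    refine ⟨t₀, fun w hw => ?_⟩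
    rw [H.ends_ep e, Sym2.mem_iff] at hw
    rcases hw with rfl | rfl
    · exact ⟨a, ha, ht₀.1⟩
    · exact ⟨b, hb, ht₀.2⟩
  · intro v
    rw [induce_connected_iff]
    constructor
    · obtain ⟨x, hx⟩ := M.bs_nonempty v
      obtain ⟨t, ht⟩ := D.covers_vertex x
      exact ⟨t, x, hx, ht⟩
    · rintro t₁ ⟨x₁, hx₁, hxt₁⟩ t₂ ⟨x₂, hx₂, hxt₂⟩
      exact hchain v x₁ hx₁ x₂ (M.bs_connected v x₁ hx₁ x₂ hx₂) t₁ t₂ hxt₁ hxt₂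
  · exact Set.disjoint_left.mpr fun v hv => hv.1
  · exact fun v hv => hv.2.1
  · exact fun v hv => hv.2.2
  · simp only [KFreeDecomp.width]
    have hbdd : BddAbove (Set.range fun t => (D.bag t \ D.L).ncard - 1) := by
      refine ⟨Nat.card G.V, ?_⟩
      rintro _ ⟨t, rfl⟩
      calc (D.bag t \ D.L).ncard - 1 ≤ (D.bag t \ D.L).ncard := Nat.sub_le _ _
        _ ≤ (Set.univ : Set G.V).ncard :=
            Set.ncard_le_ncard (Set.subset_univ _) Set.finite_univ
        _ = Nat.card G.V := Set.ncard_univ _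
    refine ciSup_le fun t => ?_
    refine le_trans (Nat.sub_le_sub_right ?_ 1) (le_ciSup hbdd t)
    set f : H.V → G.V := fun v =>
      if h : ∃ y, y ∈ M.bs v ∧ y ∈ D.bag t ∧ y ∉ D.L then h.choose
      else (M.bs_nonempty v).choose with hf
    have hfmem : ∀ v ∈ bag' t \ L', f v ∈ M.bs v ∧ f v ∈ D.bag t ∧ f v ∉ D.L := by
      intro v hv
      have h := hsel t v hv.1 hv.2
      simp only [hf]
      rw [dif_pos h]
      exact h.choose_spec
    refine Set.ncard_le_ncard_of_injOn f
      (fun v hv => ⟨(hfmem v hv).2.1, (hfmem v hv).2.2⟩) ?_ (Set.toFinite _)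
    intro v₁ hv₁ v₂ hv₂ hfe
    by_contra hne
    exact Set.disjoint_left.mp (M.bs_disjoint v₁ v₂ hne) (hfmem v₁ hv₁).1
      (hfe ▸ (hfmem v₂ hv₂).1)

/-- `K`-free treewidth is monotone under rooted minors. -/
theorem statement_9 (H : MGraph) (KH : Set H.V) (G : MGraph) (KG : Set G.V)
    (h : IsRootedMinor H KH G KG) : twK H KH ≤ twK G KG := by
  obtain ⟨M, hM⟩ := h
  have hne : {w | ∃ D : KFreeDecomp G KG, D.width = w}.Nonempty :=
    ⟨_, trivialDecomp G KG, rfl⟩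
  obtain ⟨D, hD⟩ := Nat.sInf_mem hne
  obtain ⟨D', hD'⟩ := key_step M hM D
  calc twK H KH ≤ D'.width := Nat.sInf_le ⟨D', rfl⟩
    _ ≤ D.width := hD'
    _ = twK G KG := hD

end TDMPaper
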